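/- Let G be the complete bipartite graph on the bipartition X = {x_1,…,x_n}, Y = {y_1,…,y_m} (every x_i is adjacent to every y_j). Then the defining ideal 𝒬 = ker ψ of the Rees algebra of the edge ideal I(G) is generated by the binomials T_{w+} − T_{w−} for even cycles w of G together with the binomials v_0 T_{w+} − v_a T_{w−} for paths w = (v_0,…,v_a) of even length a in G; in particular, 𝒬 is generated by binomials whose monomials have total degree at most 1 in the variables x_1,…,x_n,y_1,…,y_m. -/

import Mathlib

open MvPolynomial

/-- The `k`-algebra map `ψ : S = k[x,y,T] → R[t]` presenting the Rees algebra of the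
edge ideal of the bipartite graph whose edges are given by `edge : E → Fin n × Fin m`
(the edge indexed by `e` joins `x_{(edge e).1}` and `y_{(edge e).2}`).
Here the variables of `S` are indexed by `Sum (Sum (Fin n) (Fin m)) E` and the variables
of `R[t]` by `Sum (Sum (Fin n) (Fin m)) Unit` (`Sum.inr ()` playing the role of `t`). -/
noncomputable def reesPsi (k : Type*) [CommSemiring k] (n m : ℕ) {E : Type*}
    (edge : E → Fin n × Fin m) :
    MvPolynomial (Sum (Sum (Fin n) (Fin m)) E) k →ₐ[k]
      MvPolynomial (Sum (Sum (Fin n) (Fin m)) Unit) k :=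
  aeval fun s =>
    match s with
    | Sum.inl v => X (Sum.inl v)
    | Sum.inr e =>
        X (Sum.inl (Sum.inl (edge e).1)) * X (Sum.inl (Sum.inr (edge e).2)) * X (Sum.inr ())

/-- A walk `(v_0, …, v_a)` of length `a` in the bipartite graph whose edges are given by
`edge : E → Fin n × Fin m`: the `j`-th step traverses the edge indexed by `edgeIdx j`,
which joins the vertices `vert j` and `vert (j+1)`. -/
structure BipWalk (n m : ℕ) {E : Type*} (edge : E → Fin n × Fin m) (a : ℕ) where
  vert : Fin (a + 1) → Sum (Fin n) (Fin m)
  edgeIdx : Fin a → E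
  incident : ∀ j : Fin a,
    (vert j.castSucc = Sum.inl (edge (edgeIdx j)).1 ∧
      vert j.succ = Sum.inr (edge (edgeIdx j)).2) ∨
    (vert j.castSucc = Sum.inr (edge (edgeIdx j)).2 ∧
      vert j.succ = Sum.inl (edge (edgeIdx j)).1)

/-- `T_{w+} = ∏_{j even} T_{i_j}`, the product of the `T`-variables of the even-numbered
edges of the walk `w` (edges being numbered `1, …, a`, so `j`-th edge is `edgeIdx (j-1)`). -/
noncomputable def Tplus (k : Type*) [CommSemiring k] {n m a : ℕ} {E : Type*}
    {edge : E → Fin n × Fin m} (w : BipWalk n m edge a) :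
    MvPolynomial (Sum (Sum (Fin n) (Fin m)) E) k :=
  ∏ j : Fin a, if (j : ℕ) % 2 = 1 then X (Sum.inr (w.edgeIdx j)) else 1

/-- `T_{w−} = ∏_{j odd} T_{i_j}`, the product of the `T`-variables of the odd-numbered
edges of the walk `w`. -/
noncomputable def Tminus (k : Type*) [CommSemiring k] {n m a : ℕ} {E : Type*}
    {edge : E → Fin n × Fin m} (w : BipWalk n m edge a) :
    MvPolynomial (Sum (Sum (Fin n) (Fin m)) E) k :=
  ∏ j : Fin a, if (j : ℕ) % 2 = 0 then X (Sum.inr (w.edgeIdx j)) else 1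


open Finsupp in
section
namespace ReesAux

variable {n m : ℕ}

abbrev Sig (n m : ℕ) := Sum (Sum (Fin n) (Fin m)) (Fin n × Fin m)
abbrev Tau (n m : ℕ) := Sum (Sum (Fin n) (Fin m)) Unit

noncomputable def phi0 : Sig n m → (Tau n m →₀ ℕ)
  | Sum.inl v => Finsupp.single (Sum.inl v) 1
  | Sum.inr e => Finsupp.single (Sum.inl (Sum.inl e.1)) 1 +
      Finsupp.single (Sum.inl (Sum.inr e.2)) 1 + Finsupp.single (Sum.inr ()) 1

noncomputable def Phi (α : Sig n m →₀ ℕ) : Tau n m →₀ ℕ := α.sum fun s c => c • phi0 s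

lemma Phi_add (α β : Sig n m →₀ ℕ) : Phi (α + β) = Phi α + Phi β := by
  classical
  exact Finsupp.sum_add_index (fun a _ => by simp) (fun a _ b₁ b₂ => add_smul _ _ _)

lemma Phi_single (s : Sig n m) (c : ℕ) : Phi (Finsupp.single s c) = c • phi0 s := by
  classical
  exact Finsupp.sum_single_index (by simp)

lemma Phi_apply (α : Sig n m →₀ ℕ) (t : Tau n m) :
    Phi α t = ∑ s : Sig n m, α s * phi0 s t := by
  classical
  rw [Phi, Finsupp.sum, Finsupp.finset_sum_apply]
  rw [← Finset.sum_subset (Finset.subset_univ α.support)]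
  · exact Finset.sum_congr rfl fun s _ => by simp
  · intro s _ hs
    simp [Finsupp.notMem_support_iff.mp hs]

lemma Phi_t (α : Sig n m →₀ ℕ) :
    Phi α (Sum.inr ()) = ∑ e : Fin n × Fin m, α (Sum.inr e) := by
  rw [Phi_apply, Fintype.sum_sum_type]
  simp [phi0, Finsupp.single_apply]

lemma Phi_x (α : Sig n m →₀ ℕ) (p : Fin n) :
    Phi α (Sum.inl (Sum.inl p)) =
      α (Sum.inl (Sum.inl p)) + ∑ q : Fin m, α (Sum.inr (p, q)) := by
  classical
  rw [Phi_apply, Fintype.sum_sum_type]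
  congr 1
  · simp [phi0, Finsupp.single_apply, mul_ite]
  · rw [Fintype.sum_prod_type]
    simp [phi0, Finsupp.single_apply, mul_ite]

lemma Phi_y (α : Sig n m →₀ ℕ) (q : Fin m) :
    Phi α (Sum.inl (Sum.inr q)) =
      α (Sum.inl (Sum.inr q)) + ∑ p : Fin n, α (Sum.inr (p, q)) := by
  classical
  rw [Phi_apply, Fintype.sum_sum_type]
  congr 1
  · simp [phi0, Finsupp.single_apply, mul_ite]
  · rw [Fintype.sum_prod_type_right]
    simp [phi0, Finsupp.single_apply, mul_ite]

lemma prod_monomial_one {k σ ι : Type*} [CommSemiring k] (s : Finset ι) (g : ι → (σ →₀ ℕ)) :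
    (∏ i ∈ s, monomial (g i) (1 : k)) = monomial (∑ i ∈ s, g i) 1 := by
  classical
  induction s using Finset.induction with
  | empty => simp
  | insert _ _ h ih => rw [Finset.prod_insert h, Finset.sum_insert h, ih, monomial_mul, one_mul]

noncomputable def gFun (k : Type*) [CommSemiring k] {n m : ℕ} :
    Sig n m → MvPolynomial (Tau n m) k := fun s =>
  match s with
  | Sum.inl v => X (Sum.inl v)
  | Sum.inr e => X (Sum.inl (Sum.inl e.1)) * X (Sum.inl (Sum.inr e.2)) * X (Sum.inr ())

lemma gFun_eq (k : Type*) [CommSemiring k] (s : Sig n m) :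
    gFun k s = monomial (phi0 s) (1 : k) := by
  rcases s with v | e
  · rw [gFun, X]; rfl
  · show _ * _ * _ = monomial (phi0 (Sum.inr e)) (1:k)
    simp only [phi0]
    rw [X, X, X, monomial_mul, monomial_mul, one_mul, one_mul]

lemma reesPsi_eq (k : Type*) [CommSemiring k] :
    reesPsi k n m (id : Fin n × Fin m → Fin n × Fin m) = aeval (gFun k) := by
  apply MvPolynomial.algHom_ext
  intro s
  rw [reesPsi, aeval_X, aeval_X]
  rcases s with v | e <;> rfl

lemma reesPsi_monomial (k : Type*) [CommSemiring k] (α : Sig n m →₀ ℕ) (c : k) :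
    reesPsi k n m (id : Fin n × Fin m → Fin n × Fin m) (monomial α c) =
      monomial (Phi α) c := by
  classical
  rw [reesPsi_eq, aeval_monomial]
  have h1 : (α.prod fun i k' => (gFun k i) ^ k')
      = α.prod fun i k' => (monomial (phi0 i) (1 : k)) ^ k' :=
    Finsupp.prod_congr fun i _ => by rw [gFun_eq]
  have h2 : ∀ i ∈ α.support, (monomial (phi0 i) (1 : k)) ^ (α i) =
      monomial (α i • phi0 i) 1 := fun i _ => by rw [monomial_pow, one_pow]
  rw [h1, Finsupp.prod, Finset.prod_congr rfl h2, prod_monomial_one,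
    algebraMap_eq, C_mul_monomial, mul_one]
  rfl


lemma walk_prod {M : Type*} [CommMonoid M] (f : ℕ → M) (c : M) (ℓ : ℕ) :
    f 0 * ∏ j ∈ Finset.range (2 * ℓ), (if j % 2 = 1 then f j * f (j + 1) * c else 1)
      = f (2 * ℓ) *
        ∏ j ∈ Finset.range (2 * ℓ), (if j % 2 = 0 then f j * f (j + 1) * c else 1) := by
  induction ℓ with
  | zero => simp
  | succ ℓ ih =>
    have h2 : 2 * (ℓ + 1) = (2 * ℓ) + 1 + 1 := by ring
    rw [h2, Finset.prod_range_succ, Finset.prod_range_succ, Finset.prod_range_succ,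
      Finset.prod_range_succ, if_neg (by omega), if_pos (by omega), if_pos (by omega),
      if_neg (by omega), mul_one, mul_one, ← mul_assoc, ih]
    have : 2 * ℓ + 1 + 1 = 2 * ℓ + 2 := by omega
    rw [this]
    ac_rfl

variable (k : Type*) [CommSemiring k]

/-- totalized vertex variable function -/
noncomputable def Vf {a : ℕ} (w : BipWalk n m (id : Fin n × Fin m → Fin n × Fin m) a) :
    ℕ → MvPolynomial (Tau n m) k := fun j =>
  if h : j < a + 1 then X (Sum.inl (w.vert ⟨j, h⟩)) else 1

lemma Vf_fin {a : ℕ} (w : BipWalk n m (id : Fin n × Fin m → Fin n × Fin m) a)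
    (j : ℕ) (h : j < a + 1) : Vf k w j = X (Sum.inl (w.vert ⟨j, h⟩)) := dif_pos h

lemma psi_X_edge {a : ℕ} (w : BipWalk n m (id : Fin n × Fin m → Fin n × Fin m) a)
    (j : Fin a) :
    reesPsi k n m (id : Fin n × Fin m → Fin n × Fin m) (X (Sum.inr (w.edgeIdx j)))
      = Vf k w j * Vf k w (j + 1) * X (Sum.inr ()) := by
  have h1 : (j : ℕ) < a + 1 := by omega
  have h2 : (j : ℕ) + 1 < a + 1 := by omega
  rw [Vf_fin k w j h1, Vf_fin k w _ h2]
  have e1 : (⟨(j : ℕ), h1⟩ : Fin (a+1)) = j.castSucc := rfl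
  have e2 : (⟨(j : ℕ) + 1, h2⟩ : Fin (a+1)) = j.succ := rfl
  rw [e1, e2, reesPsi_eq, aeval_X]
  rcases w.incident j with ⟨hc, hs⟩ | ⟨hc, hs⟩
  · rw [hc, hs, gFun]
    simp only [id_eq]
  · rw [hc, hs, gFun]
    simp only [id_eq]
    ring

lemma psi_Tplus {a : ℕ} (w : BipWalk n m (id : Fin n × Fin m → Fin n × Fin m) a) :
    reesPsi k n m (id : Fin n × Fin m → Fin n × Fin m) (Tplus k w)
      = ∏ j ∈ Finset.range a,
          (if j % 2 = 1 then Vf k w j * Vf k w (j + 1) * X (Sum.inr ()) else 1) := by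
  rw [Tplus, map_prod]
  rw [← Fin.prod_univ_eq_prod_range
    (fun j => if j % 2 = 1 then Vf k w j * Vf k w (j + 1) * X (Sum.inr ()) else 1) a]
  refine Finset.prod_congr rfl fun j _ => ?_
  rw [apply_ite (reesPsi k n m (id : Fin n × Fin m → Fin n × Fin m)), map_one,
    psi_X_edge k w j]

lemma psi_Tminus {a : ℕ} (w : BipWalk n m (id : Fin n × Fin m → Fin n × Fin m) a) :
    reesPsi k n m (id : Fin n × Fin m → Fin n × Fin m) (Tminus k w)
      = ∏ j ∈ Finset.range a,
          (if j % 2 = 0 then Vf k w j * Vf k w (j + 1) * X (Sum.inr ()) else 1) := by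
  rw [Tminus, map_prod]
  rw [← Fin.prod_univ_eq_prod_range
    (fun j => if j % 2 = 0 then Vf k w j * Vf k w (j + 1) * X (Sum.inr ()) else 1) a]
  refine Finset.prod_congr rfl fun j _ => ?_
  rw [apply_ite (reesPsi k n m (id : Fin n × Fin m → Fin n × Fin m)), map_one,
    psi_X_edge k w j]

lemma psi_walk_key {ℓ : ℕ} (w : BipWalk n m (id : Fin n × Fin m → Fin n × Fin m) (2 * ℓ)) :
    X (Sum.inl (w.vert 0)) *
        reesPsi k n m (id : Fin n × Fin m → Fin n × Fin m) (Tplus k w)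
      = X (Sum.inl (w.vert (Fin.last (2 * ℓ)))) *
        reesPsi k n m (id : Fin n × Fin m → Fin n × Fin m) (Tminus k w) := by
  rw [psi_Tplus, psi_Tminus]
  have h0 : Vf k w 0 = X (Sum.inl (w.vert 0)) := by
    rw [Vf_fin k w 0 (by omega)]; rfl
  have hl : Vf k w (2 * ℓ) = X (Sum.inl (w.vert (Fin.last (2 * ℓ)))) := by
    rw [Vf_fin k w (2 * ℓ) (by omega)]; rfl
  rw [← h0, ← hl]
  exact walk_prod (Vf k w) (X (Sum.inr ())) ℓ


section Field
variable {k : Type*} [Field k]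

/-- the generating set from the theorem statement -/
def Gen (k : Type*) [Field k] (n m : ℕ) : Set (MvPolynomial (Sig n m) k) :=
  {f : MvPolynomial (Sum (Sum (Fin n) (Fin m)) (Fin n × Fin m)) k |
        (∃ (ℓ : ℕ) (w : BipWalk n m (id : Fin n × Fin m → Fin n × Fin m) (2 * ℓ)),
          w.vert (Fin.last (2 * ℓ)) = w.vert 0 ∧
          (Function.Injective fun j : Fin (2 * ℓ) => w.vert j.castSucc) ∧
          f = Tplus k w - Tminus k w) ∨
        (∃ (a : ℕ) (w : BipWalk n m (id : Fin n × Fin m → Fin n × Fin m) a),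
          Even a ∧ Function.Injective w.vert ∧
          f = X (Sum.inl (w.vert 0)) * Tplus k w -
              X (Sum.inl (w.vert (Fin.last a))) * Tminus k w)}

lemma gen_path2x (i i' : Fin n) (j : Fin m) (hik : i ≠ i') :
    (X (Sum.inl (Sum.inl i)) * X (Sum.inr (i', j)) -
      X (Sum.inl (Sum.inl i')) * X (Sum.inr (i, j)) : MvPolynomial (Sig n m) k)
      ∈ Gen k n m := by
  refine Or.inr ⟨2, ⟨![Sum.inl i, Sum.inr j, Sum.inl i'], ![(i, j), (i', j)], ?_⟩,
    ⟨1, rfl⟩, ?_, ?_⟩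
  · intro j0
    fin_cases j0
    · left; constructor <;> rfl
    · right; constructor <;> rfl
  · intro a b hab
    fin_cases a <;> fin_cases b <;> simp_all
  · show _ = X (Sum.inl (Sum.inl i)) * Tplus k _ - X (Sum.inl (Sum.inl i')) * Tminus k _
    rw [Tplus, Tminus, Fin.prod_univ_two, Fin.prod_univ_two]
    norm_num

lemma gen_path2y (j j' : Fin m) (i : Fin n) (hjj : j ≠ j') :
    (X (Sum.inl (Sum.inr j)) * X (Sum.inr (i, j')) -
      X (Sum.inl (Sum.inr j')) * X (Sum.inr (i, j)) : MvPolynomial (Sig n m) k)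
      ∈ Gen k n m := by
  refine Or.inr ⟨2, ⟨![Sum.inr j, Sum.inl i, Sum.inr j'], ![(i, j), (i, j')], ?_⟩,
    ⟨1, rfl⟩, ?_, ?_⟩
  · intro j0
    fin_cases j0
    · right; constructor <;> rfl
    · left; constructor <;> rfl
  · intro a b hab
    fin_cases a <;> fin_cases b <;> simp_all
  · show _ = X (Sum.inl (Sum.inr j)) * Tplus k _ - X (Sum.inl (Sum.inr j')) * Tminus k _
    rw [Tplus, Tminus, Fin.prod_univ_two, Fin.prod_univ_two]
    norm_num

lemma gen_quad (i i' : Fin n) (j j' : Fin m) (hii : i ≠ i') (hjj : j ≠ j') :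
    (X (Sum.inr (i', j)) * X (Sum.inr (i, j')) -
      X (Sum.inr (i, j)) * X (Sum.inr (i', j')) : MvPolynomial (Sig n m) k)
      ∈ Gen k n m := by
  refine Or.inl ⟨2, ⟨![Sum.inl i, Sum.inr j, Sum.inl i', Sum.inr j', Sum.inl i],
    ![(i, j), (i', j), (i', j'), (i, j')], ?_⟩, rfl, ?_, ?_⟩
  · intro j0
    fin_cases j0
    · left; constructor <;> rfl
    · right; constructor <;> rfl
    · left; constructor <;> rfl
    · right; constructor <;> rfl
  · have hfun : (fun j0 : Fin (2 * 2) =>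
        (![Sum.inl i, Sum.inr j, Sum.inl i', Sum.inr j', Sum.inl i] :
          Fin (2 * 2 + 1) → Sum (Fin n) (Fin m)) j0.castSucc)
        = ![Sum.inl i, Sum.inr j, Sum.inl i', Sum.inr j'] := by
      funext j0
      fin_cases j0 <;> rfl
    show Function.Injective (fun j0 : Fin (2 * 2) =>
        (![Sum.inl i, Sum.inr j, Sum.inl i', Sum.inr j', Sum.inl i] :
          Fin (2 * 2 + 1) → Sum (Fin n) (Fin m)) j0.castSucc)
    rw [hfun]
    intro a b hab
    fin_cases a <;> fin_cases b <;> simp_all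
  · show _ = Tplus k _ - Tminus k _
    rw [Tplus, Tminus, Fin.prod_univ_four, Fin.prod_univ_four]
    simp only [show ((0 : Fin (2*2)) : ℕ) = 0 from rfl, show ((1 : Fin (2*2)) : ℕ) = 1 from rfl,
      show ((2 : Fin (2*2)) : ℕ) = 2 from rfl, show ((3 : Fin (2*2)) : ℕ) = 3 from rfl]
    norm_num
    rfl

end Field

section Moves
variable {k : Type*} [Field k]

noncomputable def Vx (i : Fin n) : Sig n m →₀ ℕ := Finsupp.single (Sum.inl (Sum.inl i)) 1
noncomputable def Vy (j : Fin m) : Sig n m →₀ ℕ := Finsupp.single (Sum.inl (Sum.inr j)) 1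
noncomputable def Ee (i : Fin n) (j : Fin m) : Sig n m →₀ ℕ := Finsupp.single (Sum.inr (i, j)) 1

/-- connectedness relation: the difference of monomials lies in the span. -/
def Mv (k : Type*) [Field k] {n m : ℕ} (α β : Sig n m →₀ ℕ) : Prop :=
  (monomial α (1 : k) - monomial β 1) ∈ Ideal.span (Gen k n m)

lemma Mv.refl (α : Sig n m →₀ ℕ) : Mv k α α := by
  unfold Mv; rw [sub_self]; exact zero_mem _

lemma Mv.symm {α β : Sig n m →₀ ℕ} (h : Mv k α β) : Mv k β α := by
  unfold Mv at h ⊢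
  have := neg_mem h
  rwa [neg_sub] at this

lemma Mv.trans {α β γ : Sig n m →₀ ℕ} (h1 : Mv k α β) (h2 : Mv k β γ) : Mv k α γ := by
  unfold Mv at h1 h2 ⊢
  have := add_mem h1 h2
  rwa [sub_add_sub_cancel] at this

lemma Mv.add_left {α β : Sig n m →₀ ℕ} (γ : Sig n m →₀ ℕ) (h : Mv k α β) :
    Mv k (γ + α) (γ + β) := by
  unfold Mv at h ⊢
  have : (monomial (γ + α) (1:k) - monomial (γ + β) 1)
      = monomial γ 1 * (monomial α 1 - monomial β 1) := by
    rw [mul_sub, monomial_mul, monomial_mul, one_mul]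
  rw [this]
  exact Ideal.mul_mem_left _ _ h

lemma X_mono (s : Sig n m) : (X s : MvPolynomial (Sig n m) k) = monomial (Finsupp.single s 1) 1 := rfl

lemma binom_mem {A B : Sig n m →₀ ℕ} (γ : Sig n m →₀ ℕ)
    (h : (monomial A (1:k) - monomial B 1) ∈ Ideal.span (Gen k n m)) :
    Mv k (γ + A) (γ + B) := by
  unfold Mv
  have : (monomial (γ + A) (1:k) - monomial (γ + B) 1)
      = monomial γ 1 * (monomial A 1 - monomial B 1) := by
    rw [mul_sub, monomial_mul, monomial_mul, one_mul]
  rw [this]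
  exact Ideal.mul_mem_left _ _ h

lemma mv_xmove (γ : Sig n m →₀ ℕ) (i i' : Fin n) (j : Fin m) :
    Mv k (γ + (Vx i + Ee i' j)) (γ + (Vx i' + Ee i j)) := by
  by_cases h : i = i'
  · subst h; exact Mv.refl _
  · refine binom_mem γ ?_
    have e1 : (monomial (Vx i + Ee i' j) (1:k)) =
        X (Sum.inl (Sum.inl i)) * X (Sum.inr (i', j)) := by
      rw [X_mono, X_mono, monomial_mul, one_mul]; rfl
    have e2 : (monomial (Vx i' + Ee i j) (1:k)) =
        X (Sum.inl (Sum.inl i')) * X (Sum.inr (i, j)) := by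
      rw [X_mono, X_mono, monomial_mul, one_mul]; rfl
    rw [e1, e2]
    exact Ideal.subset_span (gen_path2x i i' j h)

lemma mv_ymove (γ : Sig n m →₀ ℕ) (j j' : Fin m) (i : Fin n) :
    Mv k (γ + (Vy j + Ee i j')) (γ + (Vy j' + Ee i j)) := by
  by_cases h : j = j'
  · subst h; exact Mv.refl _
  · refine binom_mem γ ?_
    have e1 : (monomial (Vy j + Ee i j') (1:k)) =
        X (Sum.inl (Sum.inr j)) * X (Sum.inr (i, j')) := by
      rw [X_mono, X_mono, monomial_mul, one_mul]; rfl
    have e2 : (monomial (Vy j' + Ee i j) (1:k)) =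
        X (Sum.inl (Sum.inr j')) * X (Sum.inr (i, j)) := by
      rw [X_mono, X_mono, monomial_mul, one_mul]; rfl
    rw [e1, e2]
    exact Ideal.subset_span (gen_path2y j j' i h)

lemma mv_quad (γ : Sig n m →₀ ℕ) (i i' : Fin n) (j j' : Fin m) :
    Mv k (γ + (Ee i' j + Ee i j')) (γ + (Ee i j + Ee i' j')) := by
  by_cases hii : i = i'
  · subst hii
    rw [add_comm (Ee i j) (Ee i j')]
    exact Mv.refl _
  by_cases hjj : j = j'
  · subst hjj
    rw [add_comm (Ee i j) (Ee i' j)]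
    exact Mv.refl _
  refine binom_mem γ ?_
  have e1 : (monomial (Ee i' j + Ee i j') (1:k)) =
      X (Sum.inr (i', j)) * X (Sum.inr (i, j')) := by
    rw [X_mono, X_mono, monomial_mul, one_mul]; rfl
  have e2 : (monomial (Ee i j + Ee i' j') (1:k)) =
      X (Sum.inr (i, j)) * X (Sum.inr (i', j')) := by
    rw [X_mono, X_mono, monomial_mul, one_mul]; rfl
  rw [e1, e2]
  exact Ideal.subset_span (gen_quad i i' j j' hii hjj)

lemma Phi_xmove (i i' : Fin n) (j : Fin m) :
    Phi (Vx i + Ee i' j) = Phi (Vx i' + Ee i j) := by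
  rw [Phi_add, Phi_add, Vx, Vx, Ee, Ee, Phi_single, Phi_single, Phi_single, Phi_single,
    one_smul, one_smul, one_smul, one_smul]
  show phi0 (Sum.inl (Sum.inl i)) + phi0 (Sum.inr (i', j))
      = phi0 (Sum.inl (Sum.inl i')) + phi0 (Sum.inr (i, j))
  simp only [phi0]
  abel

lemma Phi_ymove (j j' : Fin m) (i : Fin n) :
    Phi (Vy j + Ee i j') = Phi (Vy j' + Ee i j) := by
  rw [Phi_add, Phi_add, Vy, Vy, Ee, Ee, Phi_single, Phi_single, Phi_single, Phi_single,
    one_smul, one_smul, one_smul, one_smul]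
  show phi0 (Sum.inl (Sum.inr j)) + phi0 (Sum.inr (i, j'))
      = phi0 (Sum.inl (Sum.inr j')) + phi0 (Sum.inr (i, j))
  simp only [phi0]
  abel

lemma Phi_quadmove (i i' : Fin n) (j j' : Fin m) :
    Phi (Ee i' j + Ee i j') = Phi (Ee i j + Ee i' j') := by
  rw [Phi_add, Phi_add, Ee, Ee, Ee, Ee, Phi_single, Phi_single, Phi_single, Phi_single,
    one_smul, one_smul, one_smul, one_smul]
  show phi0 (Sum.inr (i', j)) + phi0 (Sum.inr (i, j'))
      = phi0 (Sum.inr (i, j)) + phi0 (Sum.inr (i', j'))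
  simp only [phi0]
  abel

lemma le_of_two_singles {s t : Sig n m} (hst : s ≠ t) {α : Sig n m →₀ ℕ}
    (hs : 0 < α s) (ht : 0 < α t) :
    Finsupp.single s 1 + Finsupp.single t 1 ≤ α := by
  rw [Finsupp.le_def]
  intro u
  rw [Finsupp.add_apply, Finsupp.single_apply, Finsupp.single_apply]
  by_cases h1 : s = u
  · subst h1
    rw [if_pos rfl, if_neg (fun h => hst h.symm)]
    omega
  · rw [if_neg h1]
    by_cases h2 : t = u
    · subst h2
      rw [if_pos rfl]
      omega
    · rw [if_neg h2]
      omega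

lemma exists_edge_of_Phi_t {α : Sig n m →₀ ℕ} (h : 0 < Phi α (Sum.inr ())) :
    ∃ e : Fin n × Fin m, 0 < α (Sum.inr e) := by
  rw [Phi_t] at h
  obtain ⟨e, -, he⟩ := Finset.exists_ne_zero_of_sum_ne_zero (by omega :
    (∑ e : Fin n × Fin m, α (Sum.inr e)) ≠ 0)
  exact ⟨e, Nat.pos_of_ne_zero he⟩

end Moves

section MainInduction
variable {k : Type*} [Field k]

lemma step_row (α : Sig n m →₀ ℕ) (p : Fin n)
    (hT : 0 < Phi α (Sum.inr ())) (hp : 0 < Phi α (Sum.inl (Sum.inl p))) :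
    ∃ α', Mv k α α' ∧ Phi α' = Phi α ∧ ∃ q, 0 < α' (Sum.inr (p, q)) := by
  by_cases hrow : ∃ q, 0 < α (Sum.inr (p, q))
  · exact ⟨α, Mv.refl _, rfl, hrow⟩
  · push_neg at hrow
    have hxp : 0 < α (Sum.inl (Sum.inl p)) := by
      rw [Phi_x] at hp
      have : (∑ q : Fin m, α (Sum.inr (p, q))) = 0 :=
        Finset.sum_eq_zero fun q _ => Nat.le_zero.mp (hrow q)
      omega
    obtain ⟨⟨i, j⟩, he⟩ := exists_edge_of_Phi_t hT
    have hle : Vx p + Ee i j ≤ α :=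
      le_of_two_singles (by simp) hxp he
    have hdec : α = (α - (Vx p + Ee i j)) + (Vx p + Ee i j) :=
      (tsub_add_cancel_of_le hle).symm
    set γ := α - (Vx p + Ee i j) with hγ
    refine ⟨γ + (Vx i + Ee p j), ?_, ?_, j, ?_⟩
    · rw [hdec]
      exact mv_xmove γ p i j
    · rw [Phi_add]
      conv_rhs => rw [hdec, Phi_add]
      rw [Phi_xmove i p j]
    · have h1 : (Ee p j : Sig n m →₀ ℕ) (Sum.inr (p, j)) = 1 := by simp [Ee]
      rw [Finsupp.add_apply, Finsupp.add_apply, h1]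
      omega

lemma step_col (α : Sig n m →₀ ℕ) (p : Fin n) (j' q : Fin m)
    (hpj : 0 < α (Sum.inr (p, j'))) (hq : 0 < Phi α (Sum.inl (Sum.inr q))) :
    ∃ α', Mv k α α' ∧ Phi α' = Phi α ∧ 0 < α' (Sum.inr (p, q)) := by
  by_cases hjq : j' = q
  · subst hjq; exact ⟨α, Mv.refl _, rfl, hpj⟩
  by_cases hcol : ∃ i', 0 < α (Sum.inr (i', q))
  · obtain ⟨i', hi'⟩ := hcol
    have hle : Ee p j' + Ee i' q ≤ α :=
      le_of_two_singles (by simp [Prod.ext_iff, hjq]) hpj hi'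
    have hdec : α = (α - (Ee p j' + Ee i' q)) + (Ee p j' + Ee i' q) :=
      (tsub_add_cancel_of_le hle).symm
    set γ := α - (Ee p j' + Ee i' q) with hγ
    refine ⟨γ + (Ee i' j' + Ee p q), ?_, ?_, ?_⟩
    · rw [hdec]
      exact mv_quad γ i' p j' q
    · rw [Phi_add]
      conv_rhs => rw [hdec, Phi_add]
      rw [Phi_quadmove i' p j' q]
    · have h1 : (Ee p q : Sig n m →₀ ℕ) (Sum.inr (p, q)) = 1 := by simp [Ee]
      rw [Finsupp.add_apply, Finsupp.add_apply, h1]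
      omega
  · push_neg at hcol
    have hyq : 0 < α (Sum.inl (Sum.inr q)) := by
      rw [Phi_y] at hq
      have : (∑ i : Fin n, α (Sum.inr (i, q))) = 0 :=
        Finset.sum_eq_zero fun i _ => Nat.le_zero.mp (hcol i)
      omega
    have hle : Vy q + Ee p j' ≤ α :=
      le_of_two_singles (by simp) hyq hpj
    have hdec : α = (α - (Vy q + Ee p j')) + (Vy q + Ee p j') :=
      (tsub_add_cancel_of_le hle).symm
    set γ := α - (Vy q + Ee p j') with hγ
    refine ⟨γ + (Vy j' + Ee p q), ?_, ?_, ?_⟩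
    · rw [hdec]
      exact mv_ymove γ q j' p
    · rw [Phi_add]
      conv_rhs => rw [hdec, Phi_add]
      rw [Phi_ymove j' q p]
    · have h1 : (Ee p q : Sig n m →₀ ℕ) (Sum.inr (p, q)) = 1 := by simp [Ee]
      rw [Finsupp.add_apply, Finsupp.add_apply, h1]
      omega

lemma Phi_Ee_t (p : Fin n) (q : Fin m) : Phi (Ee p q : Sig n m →₀ ℕ) (Sum.inr ()) = 1 := by
  rw [Ee, Phi_single, one_smul]
  simp [phi0]

lemma mv_of_Phi_eq : ∀ (N : ℕ) (α β : Sig n m →₀ ℕ),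
    Phi α (Sum.inr ()) = N → Phi α = Phi β → Mv k α β := by
  intro N
  induction N with
  | zero =>
    intro α β hN hab
    have hβN : Phi β (Sum.inr ()) = 0 := by rw [← hab, hN]
    rw [Phi_t] at hN hβN
    have hαe : ∀ e : Fin n × Fin m, α (Sum.inr e) = 0 := by
      intro e
      have := Finset.sum_eq_zero_iff.mp hN e (Finset.mem_univ e)
      exact this
    have hβe : ∀ e : Fin n × Fin m, β (Sum.inr e) = 0 := by
      intro e
      exact Finset.sum_eq_zero_iff.mp hβN e (Finset.mem_univ e)
    have : α = β := by
      ext s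
      rcases s with (v | w) | e
      · have h1 := Phi_x α v
        have h2 := Phi_x β v
        rw [hab] at h1
        have hs1 : (∑ q : Fin m, α (Sum.inr (v, q))) = 0 :=
          Finset.sum_eq_zero fun q _ => hαe _
        have hs2 : (∑ q : Fin m, β (Sum.inr (v, q))) = 0 :=
          Finset.sum_eq_zero fun q _ => hβe _
        omega
      · have h1 := Phi_y α w
        have h2 := Phi_y β w
        rw [hab] at h1
        have hs1 : (∑ i : Fin n, α (Sum.inr (i, w))) = 0 :=
          Finset.sum_eq_zero fun i _ => hαe _
        have hs2 : (∑ i : Fin n, β (Sum.inr (i, w))) = 0 :=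
          Finset.sum_eq_zero fun i _ => hβe _
        omega
      · rw [hαe e, hβe e]
    rw [this]
    exact Mv.refl _
  | succ N ih =>
    intro α β hN hab
    have hT : 0 < Phi α (Sum.inr ()) := by omega
    have hTβ : 0 < Phi β (Sum.inr ()) := by rw [← hab]; omega
    obtain ⟨⟨p, q⟩, hpq⟩ := exists_edge_of_Phi_t hTβ
    have hp : 0 < Phi α (Sum.inl (Sum.inl p)) := by
      rw [hab, Phi_x]
      have : β (Sum.inr (p, q)) ≤ ∑ q' : Fin m, β (Sum.inr (p, q')) :=
        Finset.single_le_sum (f := fun q' => β (Sum.inr (p, q')))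
          (fun q' _ => Nat.zero_le _) (Finset.mem_univ q)
      omega
    obtain ⟨α1, hmv1, hPhi1, j', hj'⟩ := step_row (k := k) α p hT hp
    have hq : 0 < Phi α1 (Sum.inl (Sum.inr q)) := by
      rw [hPhi1, hab, Phi_y]
      have : β (Sum.inr (p, q)) ≤ ∑ i : Fin n, β (Sum.inr (i, q)) :=
        Finset.single_le_sum (f := fun i => β (Sum.inr (i, q)))
          (fun i _ => Nat.zero_le _) (Finset.mem_univ p)
      omega
    obtain ⟨α2, hmv2, hPhi2, hα2⟩ := step_col (k := k) α1 p j' q hj' hq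
    have hle2 : Ee p q ≤ α2 := by
      rw [Ee, Finsupp.single_le_iff]
      omega
    have hleβ : Ee p q ≤ β := by
      rw [Ee, Finsupp.single_le_iff]
      omega
    set γa := α2 - Ee p q with hga
    set γb := β - Ee p q with hgb
    have hdeca : α2 = Ee p q + γa := by
      rw [hga, add_comm]
      exact (tsub_add_cancel_of_le hle2).symm
    have hdecb : β = Ee p q + γb := by
      rw [hgb, add_comm]
      exact (tsub_add_cancel_of_le hleβ).symm
    have hPhiab : Phi γa = Phi γb := by
      have h1 : Phi (Ee p q) + Phi γa = Phi (Ee p q) + Phi γb := by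
        rw [← Phi_add, ← Phi_add, ← hdeca, ← hdecb, hPhi2, hPhi1, hab]
      exact add_left_cancel h1
    have hNa : Phi γa (Sum.inr ()) = N := by
      have h1 : Phi α2 (Sum.inr ()) = N + 1 := by rw [hPhi2, hPhi1, hN]
      rw [hdeca, Phi_add, Finsupp.add_apply, Phi_Ee_t] at h1
      omega
    have hmv3 : Mv k α2 β := by
      rw [hdeca, hdecb]
      exact Mv.add_left _ (ih γa γb hNa hPhiab)
    exact (hmv1.trans hmv2).trans hmv3

end MainInduction

section KernelDirections
variable {k : Type*} [Field k]

lemma psi_walk_key' {a : ℕ} (w : BipWalk n m (id : Fin n × Fin m → Fin n × Fin m) a)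
    (ha : ∃ ℓ, a = 2 * ℓ) :
    X (Sum.inl (w.vert 0)) *
        reesPsi k n m (id : Fin n × Fin m → Fin n × Fin m) (Tplus k w)
      = X (Sum.inl (w.vert (Fin.last a))) *
        reesPsi k n m (id : Fin n × Fin m → Fin n × Fin m) (Tminus k w) := by
  obtain ⟨ℓ, rfl⟩ := ha
  exact psi_walk_key k w

lemma psi_X_vert (v : Sum (Fin n) (Fin m)) :
    reesPsi k n m (id : Fin n × Fin m → Fin n × Fin m) (X (Sum.inl v))
      = X (Sum.inl v) := by
  rw [reesPsi_eq, aeval_X]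
  rfl

lemma span_le_ker :
    Ideal.span (Gen k n m) ≤ RingHom.ker (reesPsi k n m (id : Fin n × Fin m → Fin n × Fin m)) := by
  rw [Ideal.span_le]
  rintro f (⟨ℓ, w, hclose, hinj, rfl⟩ | ⟨a, w, ⟨r, hr⟩, hinj, rfl⟩) <;>
    rw [SetLike.mem_coe, RingHom.mem_ker]
  · rw [map_sub]
    have h := psi_walk_key' (k := k) w ⟨ℓ, rfl⟩
    rw [hclose] at h
    rw [mul_left_cancel₀ (X_ne_zero _) h, sub_self]
  · rw [map_sub, map_mul, map_mul, psi_X_vert, psi_X_vert,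
      psi_walk_key' (k := k) w ⟨r, by omega⟩, sub_self]

lemma ker_le_span :
    RingHom.ker (reesPsi k n m (id : Fin n × Fin m → Fin n × Fin m)) ≤
      Ideal.span (Gen k n m) := by
  intro f hf
  rw [RingHom.mem_ker] at hf
  suffices H : ∀ (N : ℕ) (f : MvPolynomial (Sig n m) k), f.support.card ≤ N →
      reesPsi k n m (id : Fin n × Fin m → Fin n × Fin m) f = 0 →
      f ∈ Ideal.span (Gen k n m) from H f.support.card f le_rfl hf
  intro N
  induction N with
  | zero =>
    intro f hcard hf0
    have h0 : f = 0 := by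
      rw [← MvPolynomial.support_eq_empty]
      exact Finset.card_eq_zero.mp (Nat.le_zero.mp hcard)
    rw [h0]
    exact zero_mem _
  | succ N ih =>
    intro f hcard hf0
    by_cases h0 : f = 0
    · rw [h0]; exact zero_mem _
    obtain ⟨α, hα⟩ := MvPolynomial.support_nonempty.mpr h0
    have hcα : coeff α f ≠ 0 := MvPolynomial.mem_support_iff.mp hα
    have hsum : (∑ γ ∈ f.support, if Phi γ = Phi α then coeff γ f else 0) = 0 := by
      have h1 : reesPsi k n m (id : Fin n × Fin m → Fin n × Fin m) f
          = ∑ γ ∈ f.support, monomial (Phi γ) (coeff γ f) := by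
        conv_lhs => rw [← MvPolynomial.support_sum_monomial_coeff f]
        rw [map_sum]
        exact Finset.sum_congr rfl fun γ _ => reesPsi_monomial k γ _
      have h2 := congrArg (coeff (Phi α)) (h1.symm.trans hf0)
      rw [MvPolynomial.coeff_sum, coeff_zero] at h2
      calc (∑ γ ∈ f.support, if Phi γ = Phi α then coeff γ f else 0)
          = ∑ γ ∈ f.support, coeff (Phi α) (monomial (Phi γ) (coeff γ f)) :=
            Finset.sum_congr rfl fun γ _ => (coeff_monomial _ _ _).symm
        _ = 0 := h2
    obtain ⟨β, hβs, hβα, hPhiβ⟩ : ∃ β ∈ f.support, β ≠ α ∧ Phi β = Phi α := by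
      by_contra hno
      push_neg at hno
      rw [Finset.sum_eq_single_of_mem α hα
        (fun b hb hne => if_neg (hno b hb hne)), if_pos rfl] at hsum
      exact hcα hsum
    set c := coeff α f with hc
    set g : MvPolynomial (Sig n m) k := monomial α c - monomial β c with hg
    have hgspan : g ∈ Ideal.span (Gen k n m) := by
      have hmv : Mv k α β := mv_of_Phi_eq (Phi α (Sum.inr ())) α β rfl hPhiβ.symm
      have hgc : g = C c * (monomial α 1 - monomial β 1) := by
        rw [mul_sub, C_mul_monomial, C_mul_monomial, mul_one]
      rw [hgc]
      exact Ideal.mul_mem_left _ _ hmv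
    have hgker : reesPsi k n m (id : Fin n × Fin m → Fin n × Fin m) g = 0 := by
      rw [hg, map_sub, reesPsi_monomial, reesPsi_monomial, hPhiβ, sub_self]
    have hsupp : (f - g).support ⊆ f.support.erase α := by
      intro γ hγ
      rw [Finset.mem_erase]
      have hcγ : coeff γ (f - g) ≠ 0 := MvPolynomial.mem_support_iff.mp hγ
      constructor
      · rintro rfl
        apply hcγ
        rw [MvPolynomial.coeff_sub, hg, MvPolynomial.coeff_sub, coeff_monomial,
          coeff_monomial, if_pos rfl, if_neg hβα, ← hc, sub_zero, sub_self]
      · by_contra hns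
        apply hcγ
        have hγα : α ≠ γ := fun h => hns (h ▸ hα)
        have hγβ : β ≠ γ := fun h => hns (h ▸ hβs)
        rw [MvPolynomial.coeff_sub, MvPolynomial.notMem_support_iff.mp hns, hg,
          MvPolynomial.coeff_sub, coeff_monomial, coeff_monomial, if_neg hγα,
          if_neg hγβ, sub_self, sub_self]
    have hcard' : (f - g).support.card ≤ N := by
      have h1 := Finset.card_le_card hsupp
      rw [Finset.card_erase_of_mem hα] at h1
      have h2 : 1 ≤ f.support.card := Finset.card_pos.mpr ⟨α, hα⟩
      omega
    have hf' : f - g ∈ Ideal.span (Gen k n m) :=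
      ih (f - g) hcard' (by rw [map_sub, hf0, hgker, sub_self])
    have hfg : f = (f - g) + g := by ring
    rw [hfg]
    exact add_mem hf' hgspan

lemma ker_eq_span :
    RingHom.ker (reesPsi k n m (id : Fin n × Fin m → Fin n × Fin m)) =
      Ideal.span (Gen k n m) :=
  le_antisymm ker_le_span span_le_ker

lemma Tplus_eq_monomial {a : ℕ} (w : BipWalk n m (id : Fin n × Fin m → Fin n × Fin m) a) :
    Tplus k w = monomial
      (∑ j : Fin a, if (j : ℕ) % 2 = 1 then Finsupp.single (Sum.inr (w.edgeIdx j)) 1 else 0) 1 := by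
  rw [Tplus, ← prod_monomial_one]
  refine Finset.prod_congr rfl fun j _ => ?_
  split_ifs with h
  · rfl
  · simp

lemma Tminus_eq_monomial {a : ℕ} (w : BipWalk n m (id : Fin n × Fin m → Fin n × Fin m) a) :
    Tminus k w = monomial
      (∑ j : Fin a, if (j : ℕ) % 2 = 0 then Finsupp.single (Sum.inr (w.edgeIdx j)) 1 else 0) 1 := by
  rw [Tminus, ← prod_monomial_one]
  refine Finset.prod_congr rfl fun j _ => ?_
  split_ifs with h
  · rfl
  · simp

lemma sum_aux_inl {a : ℕ} (w : BipWalk n m (id : Fin n × Fin m → Fin n × Fin m) a)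
    (r : ℕ) (v : Sum (Fin n) (Fin m)) :
    (∑ j : Fin a, if (j : ℕ) % 2 = r then Finsupp.single
        (Sum.inr (w.edgeIdx j) : Sig n m) 1 else 0) (Sum.inl v) = 0 := by
  rw [Finsupp.finset_sum_apply]
  refine Finset.sum_eq_zero fun j _ => ?_
  split_ifs with h
  · rw [Finsupp.single_apply, if_neg (by simp)]
  · rfl

lemma sum_single_inl (v0 : Sum (Fin n) (Fin m)) :
    (∑ v : Sum (Fin n) (Fin m),
      (Finsupp.single (Sum.inl v0 : Sig n m) 1) (Sum.inl v)) = 1 := by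
  have h : ∀ v : Sum (Fin n) (Fin m),
      (Finsupp.single (Sum.inl v0 : Sig n m) 1) (Sum.inl v) = if v0 = v then 1 else 0 := by
    intro v
    rw [Finsupp.single_apply]
    simp
  rw [Finset.sum_congr rfl fun v _ => h v, Finset.sum_ite_eq]
  simp

lemma gen_binomial (f : MvPolynomial (Sig n m) k) (hf : f ∈ Gen k n m) :
    ∃ α β : Sig n m →₀ ℕ,
      f = monomial α 1 - monomial β 1 ∧
      (∑ v : Sum (Fin n) (Fin m), α (Sum.inl v)) ≤ 1 ∧
      (∑ v : Sum (Fin n) (Fin m), β (Sum.inl v)) ≤ 1 := by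
  rcases hf with ⟨ℓ, w, -, -, rfl⟩ | ⟨a, w, -, -, rfl⟩
  · refine ⟨_, _, by rw [Tplus_eq_monomial, Tminus_eq_monomial], ?_, ?_⟩ <;>
      · rw [Finset.sum_congr rfl fun v _ => sum_aux_inl w _ v]
        simp
  · refine ⟨Finsupp.single (Sum.inl (w.vert 0)) 1 +
        (∑ j : Fin a, if (j : ℕ) % 2 = 1 then
          Finsupp.single (Sum.inr (w.edgeIdx j) : Sig n m) 1 else 0),
      Finsupp.single (Sum.inl (w.vert (Fin.last a))) 1 +
        (∑ j : Fin a, if (j : ℕ) % 2 = 0 then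
          Finsupp.single (Sum.inr (w.edgeIdx j) : Sig n m) 1 else 0), ?_, ?_, ?_⟩
    · rw [Tplus_eq_monomial, Tminus_eq_monomial, X_mono, X_mono, monomial_mul,
        monomial_mul]
      norm_num
    · rw [Finset.sum_congr rfl fun v _ => by
        rw [Finsupp.add_apply, sum_aux_inl w _ v, add_zero],
        sum_single_inl]
    · rw [Finset.sum_congr rfl fun v _ => by
        rw [Finsupp.add_apply, sum_aux_inl w _ v, add_zero],
        sum_single_inl]

end KernelDirections

end ReesAux
end

/-- For the complete bipartite graph `G` on `X = {x_1,…,x_n}`,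
`Y = {y_1,…,y_m}` (edges indexed by `Fin n × Fin m`, via `edge = id`), the defining ideal
`𝒬 = ker ψ` of the Rees algebra of `I(G)` is generated by the binomials `T_{w+} − T_{w−}`
for even cycles `w` together with the binomials `v_0 T_{w+} − v_a T_{w−}` for even paths
`w = (v_0,…,v_a)`; in particular, `𝒬` is generated by binomials whose monomials have
total degree at most `1` in the variables `x_1,…,x_n,y_1,…,y_m`. -/
theorem ker_reesPsi_completeBipartite_eq_span (k : Type*) [Field k] (n m : ℕ) :
    RingHom.ker (reesPsi k n m (id : Fin n × Fin m → Fin n × Fin m)) =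
      Ideal.span {f : MvPolynomial (Sum (Sum (Fin n) (Fin m)) (Fin n × Fin m)) k |
        (∃ (ℓ : ℕ) (w : BipWalk n m (id : Fin n × Fin m → Fin n × Fin m) (2 * ℓ)),
          w.vert (Fin.last (2 * ℓ)) = w.vert 0 ∧
          (Function.Injective fun j : Fin (2 * ℓ) => w.vert j.castSucc) ∧
          f = Tplus k w - Tminus k w) ∨
        (∃ (a : ℕ) (w : BipWalk n m (id : Fin n × Fin m → Fin n × Fin m) a),
          Even a ∧ Function.Injective w.vert ∧
          f = X (Sum.inl (w.vert 0)) * Tplus k w -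
              X (Sum.inl (w.vert (Fin.last a))) * Tminus k w)} ∧
    ∃ B : Set (MvPolynomial (Sum (Sum (Fin n) (Fin m)) (Fin n × Fin m)) k),
      (∀ f ∈ B, ∃ α β : (Sum (Sum (Fin n) (Fin m)) (Fin n × Fin m)) →₀ ℕ,
        f = monomial α 1 - monomial β 1 ∧
        (∑ v : Sum (Fin n) (Fin m), α (Sum.inl v)) ≤ 1 ∧
        (∑ v : Sum (Fin n) (Fin m), β (Sum.inl v)) ≤ 1) ∧
      RingHom.ker (reesPsi k n m (id : Fin n × Fin m → Fin n × Fin m)) = Ideal.span B := by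
  exact ⟨ReesAux.ker_eq_span, ReesAux.Gen k n m, ReesAux.gen_binomial, ReesAux.ker_eq_span⟩
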